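/- arXiv:2301.02335 — 2 statements merged into one kernel-verified Lean document; each statement's English description precedes it below -/
import Mathlib

section
/- Let $\mathfrak{g}=\mathfrak{g}_1\oplus\cdots\oplus\mathfrak{g}_s$ be a direct sum of ideals and $\mathfrak{k}_j\subset\mathfrak{k}\subset\mathfrak{g}$ subalgebras satisfying the alignment condition $B_{\mathfrak{g}_i}(Z_i,W_i)=\tfrac{1}{c_i}B_{\mathfrak{g}}(Z,W)$ for all $Z,W\in\mathfrak{k}$, with constants $c_i>0$. Suppose the Killing constants $c_{ij}$ are defined by $B_{\pi_i(\mathfrak{k}_j)}=c_{ij}\,B_{\mathfrak{g}_i}|_{\pi_i(\mathfrak{k}_j)\times\pi_i(\mathfrak{k}_j)}$, and that the Killing form of $\mathfrak{k}$ restricted to $\mathfrak{k}_j$ equals the Killing form of $\mathfrak{k}_j$, with $\pi_i|_{\mathfrak{k}_j}$ an isomorphism onto its image. Then $B_{\mathfrak{k}_j}(Z,W)=\tfrac{c_{ij}}{c_i}B_{\mathfrak{g}}(Z,W)$ for all $Z,W\in\mathfrak{k}_j$ and all $i$; in particular the ratio $c_{ij}/c_i$ is independent of $i$, i.e., $(c_{1j},\dots,c_{sj})=\lambda_j(c_1,\dots,c_s)$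 for some $\lambda_j>0$ whenever $B_{\mathfrak{k}_j}\neq 0$. -/
open DirectSum

/-- For an aligned subalgebra `k` of a direct sum of Lie algebras with alignment
constants `cᵢ`, and a factor `k_j ⊆ k` with Killing constants `c_{ij}`, one has
`B_{k_j}(Z,W) = (c_{ij}/cᵢ) B_g(Z,W)`; in particular the ratios `c_{ij}/cᵢ` are
independent of `i`, i.e. `(c_{1j},…,c_{sj}) = λ_j (c_1,…,c_s)` with `λ_j > 0`,
whenever `B_{k_j} ≠ 0`. -/
theorem aligned_killing_constants
    (ι : Type*) [Fintype ι] [DecidableEq ι]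
    (g : ι → Type*) [∀ i, LieRing (g i)] [∀ i, LieAlgebra ℝ (g i)]
    [∀ i, Module.Finite ℝ (g i)]
    (k kj : LieSubalgebra ℝ (⨁ i, g i)) (hle : kj ≤ k)
    (c : ι → ℝ) (hc : ∀ i, 0 < c i)
    (halign : ∀ i, ∀ Z ∈ k, ∀ W ∈ k,
      killingForm ℝ (g i) (DirectSum.lieAlgebraComponent ℝ ι g i Z)
          (DirectSum.lieAlgebraComponent ℝ ι g i W) =
        (1 / c i) * killingForm ℝ (⨁ i, g i) Z W)
    (cij : ι → ℝ) (hcij_pos : ∀ i, 0 < cij i)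
    -- the Killing constants: `B_{π_i(k_j)} = c_{ij} B_{g_i}` on `π_i(k_j)`
    (hcij : ∀ i, ∀ Z W : (kj.map (DirectSum.lieAlgebraComponent ℝ ι g i)),
      killingForm ℝ (kj.map (DirectSum.lieAlgebraComponent ℝ ι g i)) Z W =
        cij i * killingForm ℝ (g i) (Z : g i) (W : g i))
    -- the Killing form of `k` restricted to `k_j` equals that of `k_j`
    (hrestr : ∀ Z W : kj, killingForm ℝ kj Z W =
        killingForm ℝ k ⟨(Z : ⨁ i, g i), hle Z.2⟩ ⟨(W : ⨁ i, g i), hle W.2⟩)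
    -- each projection `π_i` is injective on `k_j` (isomorphism onto its image)
    (hinj : ∀ i, ∀ Z ∈ kj, DirectSum.lieAlgebraComponent ℝ ι g i Z = 0 → Z = 0) :
    (∀ i, ∀ Z W : kj, killingForm ℝ kj Z W =
        (cij i / c i) * killingForm ℝ (⨁ i, g i) (Z : ⨁ i, g i) (W : ⨁ i, g i)) ∧
      ((∃ Z W : kj, killingForm ℝ kj Z W ≠ 0) →
        ∃ lam : ℝ, 0 < lam ∧ ∀ i, cij i = lam * c i) := by
  have key : ∀ i, ∀ Z W : kj, killingForm ℝ kj Z W =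
      (cij i / c i) * killingForm ℝ (⨁ i, g i) (Z : ⨁ i, g i) (W : ⨁ i, g i) := by
    intro i Z W
    set π := DirectSum.lieAlgebraComponent ℝ ι g i with hπ
    let f : kj →ₗ⁅ℝ⁆ g i := π.comp kj.incl
    have hfinj : Function.Injective f := by
      intro x y hxy
      have h0 : π ((x : ⨁ i, g i) - (y : ⨁ i, g i)) = 0 := by
        have hxy' : π (x : ⨁ i, g i) = π (y : ⨁ i, g i) := hxy
        simp [map_sub, hxy']
      have hmem : ((x : ⨁ i, g i) - (y : ⨁ i, g i)) ∈ kj :=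
        kj.toSubmodule.sub_mem x.2 y.2
      exact Subtype.ext (sub_eq_zero.mp (hinj i _ hmem h0))
    have hrange : (f.range : Set (g i)) = (kj.map π : Set (g i)) := by
      ext x
      constructor
      · rintro ⟨y, rfl⟩
        exact ⟨(y : ⨁ i, g i), y.2, rfl⟩
      · rintro ⟨z, hz, rfl⟩
        exact ⟨⟨z, hz⟩, rfl⟩
    let e : kj ≃ₗ⁅ℝ⁆ (kj.map π) :=
      (f.equivRangeOfInjective hfinj).trans (LieEquiv.ofEq _ _ hrange)
    have h1 : killingForm ℝ kj Z W = killingForm ℝ (kj.map π) (e Z) (e W) :=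
      (LieAlgebra.killingForm_of_equiv_apply e Z W).symm
    have h2 : ∀ X : kj, ((e X : g i)) = π (X : ⨁ i, g i) := by
      intro X
      simp [e, LieEquiv.ofEq_apply, LieHom.equivRangeOfInjective_apply]
      rfl
    rw [h1, hcij i, h2, h2, halign i _ (hle Z.2) _ (hle W.2)]
    ring
  refine ⟨key, ?_⟩
  rintro ⟨Z, W, hne⟩
  rcases isEmpty_or_nonempty ι with hι | hι
  · exact ⟨1, one_pos, fun i => (hι.false i).elim⟩
  · obtain ⟨i₀⟩ := hι
    have hB : killingForm ℝ (⨁ i, g i) (Z : ⨁ i, g i) (W : ⨁ i, g i) ≠ 0 := by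
      intro h
      exact hne (by rw [key i₀ Z W, h, mul_zero])
    refine ⟨killingForm ℝ kj Z W /
        killingForm ℝ (⨁ i, g i) (Z : ⨁ i, g i) (W : ⨁ i, g i), ?_, ?_⟩
    · have := key i₀ Z W
      rw [this]
      rw [mul_div_assoc, div_self hB, mul_one]
      exact div_pos (hcij_pos i₀) (hc i₀)
    · intro i
      have := key i Z W
      rw [this, mul_div_assoc, div_self hB, mul_one]
      rw [div_mul_cancel₀ _ (ne_of_gt (hc i))]
end

section
/- Let $n\geq 1$ and let $x_1\le x_2\le\cdots\le x_n$ be positive reals. Suppose nonnegative reals $a_{ij}^k$ (for $1\le i,j,k\le n$) satisfy, for each $k$ with $\sum_{i,j}a_{ij}^k/(x_ix_j)>0$, the equation $\sum_{i,j}a_{ij}^k\tfrac{(x_i-x_j)^2}{x_ix_j}=(x_k^2-1)\sum_{i,j}a_{ij}^k\tfrac{1}{x_ix_j}$, and suppose this holds for every $k$ (with all the sums positive). Then $x_1=x_2=\cdots=x_n=1$. -/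
/-- Key algebraic lemma: if positive reals `x_1 ≤ … ≤ x_n` satisfy, for every `k`,
`∑_{i,j} a_{ij}^k (x_i - x_j)²/(x_i x_j) = (x_k² - 1) ∑_{i,j} a_{ij}^k/(x_i x_j)`
with nonnegative weights `a_{ij}^k` whose weighted sums are positive, then all
`x_k = 1`. -/
theorem all_eq_one_of_convex_combination
    (n : ℕ) (hn : 1 ≤ n)
    (x : Fin n → ℝ) (hx : ∀ i, 0 < x i)
    (hmono : ∀ i j : Fin n, i ≤ j → x i ≤ x j)
    (a : Fin n → Fin n → Fin n → ℝ) (ha : ∀ i j k, 0 ≤ a i j k)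
    (hpos : ∀ k, 0 < ∑ i, ∑ j, a i j k / (x i * x j))
    (heq : ∀ k, ∑ i, ∑ j, a i j k * ((x i - x j) ^ 2 / (x i * x j)) =
      (x k ^ 2 - 1) * ∑ i, ∑ j, a i j k / (x i * x j)) :
    ∀ k, x k = 1 := by
  have hn' : 0 < n := hn
  set Z : Fin n := ⟨0, hn'⟩ with hZdef
  set N : Fin n := ⟨n - 1, Nat.sub_lt hn' one_pos⟩ with hNdef
  have hZle : ∀ i : Fin n, x Z ≤ x i := fun i =>
    hmono Z i (by simp [hZdef, Fin.le_def])
  have hleN : ∀ i : Fin n, x i ≤ x N := fun i =>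
    hmono i N (by simp [hNdef, Fin.le_def]; omega)
  -- Step 1: every x k satisfies 1 ≤ x k
  have hge : ∀ k : Fin n, 1 ≤ x k := by
    intro k
    have hL : 0 ≤ ∑ i, ∑ j, a i j k * ((x i - x j) ^ 2 / (x i * x j)) := by
      apply Finset.sum_nonneg; intro i _
      apply Finset.sum_nonneg; intro j _
      exact mul_nonneg (ha i j k)
        (div_nonneg (sq_nonneg _) (mul_pos (hx i) (hx j)).le)
    have h2 : 0 ≤ x k ^ 2 - 1 := by
      have h := heq k
      nlinarith [hpos k]
    nlinarith [hx k]
  -- Step 2: x N ^ 2 - 1 ≤ (x N - x Z) ^ 2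
  have hbound : x N ^ 2 - 1 ≤ (x N - x Z) ^ 2 := by
    have hLHS : ∑ i, ∑ j, a i j N * ((x i - x j) ^ 2 / (x i * x j)) ≤
        (x N - x Z) ^ 2 * ∑ i, ∑ j, a i j N / (x i * x j) := by
      rw [Finset.mul_sum]
      apply Finset.sum_le_sum; intro i _
      rw [Finset.mul_sum]
      apply Finset.sum_le_sum; intro j _
      have hsq : (x i - x j) ^ 2 ≤ (x N - x Z) ^ 2 := by
        nlinarith [hZle i, hZle j, hleN i, hleN j]
      have hd : 0 ≤ a i j N / (x i * x j) :=
        div_nonneg (ha i j N) (mul_pos (hx i) (hx j)).le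
      calc a i j N * ((x i - x j) ^ 2 / (x i * x j))
          = (x i - x j) ^ 2 * (a i j N / (x i * x j)) := by ring
        _ ≤ (x N - x Z) ^ 2 * (a i j N / (x i * x j)) :=
            mul_le_mul_of_nonneg_right hsq hd
    have h := heq N
    have hS := hpos N
    nlinarith
  -- Step 3: conclude x N ≤ x Z, hence all equal to 1
  have hNZ : x N ≤ x Z := by nlinarith [hge Z, hZle N]
  intro k
  have h1 : x N ≤ 1 := by nlinarith [hge Z, hZle N]
  have := hge k
  have := hleN k
  linarith
end
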